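/- For any graphs G and H, ϑ⁻(G) · ϑ⁺(H) ≤ ϑ⁺(G ∗ H), where ∗ is the disjunctive product: the tensor (Kronecker) product B ⊗ C of feasible primal solutions B for ϑ⁻(G) and C for ϑ⁺(H) is feasible for ϑ⁺(G ∗ H) with objective value tr(BJ)·tr(CJ). -/

import Mathlib

open Finset

namespace SimpleGraph

variable {V W : Type*}

/-- The strong graph product. -/
def strongProd (G : SimpleGraph V) (H : SimpleGraph W) : SimpleGraph (V × W) where
  Adj x y := x ≠ y ∧ (x.1 = y.1 ∨ G.Adj x.1 y.1) ∧ (x.2 = y.2 ∨ H.Adj x.2 y.2)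
  symm := by
    refine ⟨?_⟩
    rintro x y ⟨hne, h1, h2⟩
    exact ⟨hne.symm, h1.imp Eq.symm (fun h => G.adj_symm h), h2.imp Eq.symm (fun h => H.adj_symm h)⟩
  loopless := by refine ⟨?_⟩; rintro x ⟨hne, -, -⟩; exact hne rfl

/-- The disjunctive graph product. -/
def disjProd (G : SimpleGraph V) (H : SimpleGraph W) : SimpleGraph (V × W) where
  Adj x y := G.Adj x.1 y.1 ∨ H.Adj x.2 y.2
  symm := ⟨fun _ _ h => h.imp (fun h => G.adj_symm h) (fun h => H.adj_symm h)⟩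
  loopless := ⟨fun x h => h.elim (fun h' => G.irrefl h') (fun h' => H.irrefl h')⟩

/-- A finite set of vertices is independent if no two of its members are adjacent. -/
def IsIndep (G : SimpleGraph V) (s : Finset V) : Prop :=
  ∀ ⦃v⦄, v ∈ s → ∀ ⦃w⦄, w ∈ s → ¬ G.Adj v w

/-- The independence number. -/
noncomputable def alpha (G : SimpleGraph V) [Fintype V] : ℕ :=
  sSup {n | ∃ s : Finset V, G.IsIndep s ∧ s.card = n}

/-- The fractional packing number. -/
noncomputable def alphaStar (G : SimpleGraph V) [Fintype V] : ℝ :=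
  sSup {x | ∃ t : V → ℝ, (∀ v, 0 ≤ t v) ∧
    (∀ C : Finset V, G.IsClique (C : Set V) → ∑ v ∈ C, t v ≤ 1) ∧ x = ∑ v, t v}

/-- The Lovász number. -/
noncomputable def lovTheta (G : SimpleGraph V) [Fintype V] : ℝ :=
  sSup {x | ∃ B : Matrix V V ℝ, B.PosSemidef ∧ B.trace = 1 ∧
    (∀ v w, G.Adj v w → B v w = 0) ∧ x = ∑ v, ∑ w, B v w}

/-- Schrijver's variant of the Lovász number. -/
noncomputable def thetaMinus (G : SimpleGraph V) [Fintype V] : ℝ :=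
  sSup {x | ∃ B : Matrix V V ℝ, B.PosSemidef ∧ B.trace = 1 ∧ (∀ v w, 0 ≤ B v w) ∧
    (∀ v w, G.Adj v w → B v w = 0) ∧ x = ∑ v, ∑ w, B v w}

/-- Szegedy's variant of the Lovász number. -/
noncomputable def thetaPlus (G : SimpleGraph V) [Fintype V] : ℝ :=
  sSup {x | ∃ B : Matrix V V ℝ, B.PosSemidef ∧ B.trace = 1 ∧
    (∀ v w, G.Adj v w → B v w ≤ 0) ∧ x = ∑ v, ∑ w, B v w}

/-- The clique covering number. -/
noncomputable def cliqueCoverNum (G : SimpleGraph V) [Fintype V] : ℕ :=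
  sInf {n | ∃ C : Fin n → Finset V, (∀ i, G.IsClique (C i : Set V)) ∧ ∀ v, ∃ i, v ∈ C i}

/-- The blow-up of a graph along integer vertex weights. -/
def blup (G : SimpleGraph V) (p : V → ℕ) : SimpleGraph (Σ v, Fin (p v)) where
  Adj x y := G.Adj x.1 y.1
  symm := ⟨fun _ _ h => G.adj_symm h⟩
  loopless := ⟨fun x h => G.irrefl h⟩

/-- The weighted independence number (integer weights). -/
noncomputable def alphaWNat (G : SimpleGraph V) [Fintype V] (p : V → ℕ) : ℕ :=
  sSup {n | ∃ s : Finset V, G.IsIndep s ∧ n = ∑ v ∈ s, p v}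

/-- The weighted independence number (real weights). -/
noncomputable def alphaW (G : SimpleGraph V) [Fintype V] (p : V → ℝ) : ℝ :=
  sSup {x | ∃ s : Finset V, G.IsIndep s ∧ x = ∑ v ∈ s, p v}

end SimpleGraph

open SimpleGraph
open scoped RealInnerProductSpace

section Helpers
open Matrix

lemma kron_psd' {V W : Type*} [Fintype V] [Fintype W]
    {B : Matrix V V ℝ} {C : Matrix W W ℝ}
    (hB : B.PosSemidef) (hC : C.PosSemidef) : (kroneckerMap (· * ·) B C).PosSemidef := by
  obtain ⟨B₁, rfl⟩ : ∃ B₁ : Matrix V V ℝ, B = B₁ᴴ * B₁ := by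
    classical
    open scoped MatrixOrder in
    obtain ⟨a, rfl⟩ := CStarAlgebra.nonneg_iff_eq_star_mul_self.mp hB.nonneg; exact ⟨a, rfl⟩
  obtain ⟨C₁, rfl⟩ : ∃ C₁ : Matrix W W ℝ, C = C₁ᴴ * C₁ := by
    classical
    open scoped MatrixOrder in
    obtain ⟨a, rfl⟩ := CStarAlgebra.nonneg_iff_eq_star_mul_self.mp hC.nonneg; exact ⟨a, rfl⟩
  rw [Matrix.mul_kronecker_mul]
  have h : kroneckerMap (· * ·) B₁ᴴ C₁ᴴ = (kroneckerMap (· * ·) B₁ C₁)ᴴ := by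
    ext p q; simp [Matrix.conjTranspose_apply]
  rw [h]
  exact Matrix.posSemidef_conjTranspose_mul_self _

lemma sum_sum_nonneg' {V : Type*} [Fintype V] {B : Matrix V V ℝ} (hB : B.PosSemidef) :
    0 ≤ ∑ v, ∑ w, B v w := by
  have := hB.dotProduct_mulVec_nonneg (fun _ => 1)
  simpa [dotProduct, Matrix.mulVec] using this

lemma two_mul_le' {V : Type*} [Fintype V] [DecidableEq V] {B : Matrix V V ℝ}
    (hB : B.PosSemidef) (v w : V) : 2 * B v w ≤ B v v + B w w := by
  have h := hB.dotProduct_mulVec_nonneg (Pi.single v (1:ℝ) - Pi.single w 1)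
  have hsym : B w v = B v w := by
    have h1 := hB.1; rw [Matrix.IsHermitian] at h1
    conv_lhs => rw [← h1]
    simp [Matrix.conjTranspose_apply]
  by_cases hvw : v = w
  · subst hvw; linarith
  · simp [dotProduct, Matrix.mulVec, star_trivial, Pi.single_apply, sub_mul, mul_sub,
      Finset.sum_sub_distrib, Finset.mul_sum, hvw, Ne.symm hvw] at h
    nlinarith [h]

lemma sum_sum_le_card_mul_trace' {V : Type*} [Fintype V] {B : Matrix V V ℝ}
    (hB : B.PosSemidef) : ∑ v, ∑ w, B v w ≤ (Fintype.card V : ℝ) * B.trace := by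
  classical
  have h1 : ∑ v, ∑ w, B v w ≤ ∑ v, ∑ w, (B v v + B w w) / 2 :=
    Finset.sum_le_sum fun v _ => Finset.sum_le_sum fun w _ => by
      linarith [two_mul_le' hB v w]
  refine h1.trans_eq ?_
  have e1 : ∑ v, ∑ _x : V, B v v = (Fintype.card V : ℝ) * B.trace := by
    simp [Matrix.trace, Matrix.diag, Finset.mul_sum, mul_comm]
  have e2 : ∑ _v : V, ∑ w : V, B w w = (Fintype.card V : ℝ) * B.trace := by
    rw [Finset.sum_comm]; exact e1
  calc ∑ v, ∑ w, (B v v + B w w) / 2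
      = ((∑ v, ∑ _x : V, B v v) + ∑ _v : V, ∑ w : V, B w w) / 2 := by
        simp only [← Finset.sum_div, Finset.sum_add_distrib]
    _ = (Fintype.card V : ℝ) * B.trace := by rw [e1, e2]; ring

lemma sum_sum_kron' {V W : Type*} [Fintype V] [Fintype W]
    (B : Matrix V V ℝ) (C : Matrix W W ℝ) :
    ∑ p : V × W, ∑ q : V × W, B p.1 q.1 * C p.2 q.2
      = (∑ v, ∑ w, B v w) * (∑ v, ∑ w, C v w) := by
  have inner : ∀ (v : V) (w : W), (∑ q : V × W, B v q.1 * C w q.2)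
      = (∑ v', B v v') * (∑ w', C w w') := fun v w => by
    rw [Fintype.sum_prod_type, ← Finset.sum_mul_sum]
  calc ∑ p : V × W, ∑ q : V × W, B p.1 q.1 * C p.2 q.2
      = ∑ p : V × W, (∑ v', B p.1 v') * (∑ w', C p.2 w') :=
        Finset.sum_congr rfl (fun p _ => inner p.1 p.2)
    _ = (∑ v, ∑ w, B v w) * (∑ v, ∑ w, C v w) := by
        rw [Finset.sum_mul_sum, Fintype.sum_prod_type]

lemma sup_mul_sup_le' {S₁ S₂ S₃ : Set ℝ} (h₁ : ∀ x ∈ S₁, 0 ≤ x) (h₂ : ∀ y ∈ S₂, 0 ≤ y)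
    (h₃ : ∀ z ∈ S₃, 0 ≤ z) (hb : BddAbove S₃)
    (hprod : ∀ x ∈ S₁, ∀ y ∈ S₂, x * y ∈ S₃) :
    sSup S₁ * sSup S₂ ≤ sSup S₃ := by
  have hc : 0 ≤ sSup S₃ := Real.sSup_nonneg h₃
  rcases S₁.eq_empty_or_nonempty with h | hne₁
  · simp [h, Real.sSup_empty, hc]
  rcases S₂.eq_empty_or_nonempty with h | hne₂
  · simp [h, Real.sSup_empty, hc]
  have key : ∀ x ∈ S₁, x * sSup S₂ ≤ sSup S₃ := by
    intro x hx
    rcases eq_or_lt_of_le (h₁ x hx) with h0 | hxpos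
    · simp [← h0, hc]
    · rw [mul_comm, ← le_div_iff₀ hxpos]
      refine csSup_le hne₂ fun y hy => (le_div_iff₀ hxpos).2 ?_
      rw [mul_comm]
      exact le_csSup hb (hprod x hx y hy)
  rcases eq_or_lt_of_le (Real.sSup_nonneg h₂) with hb0 | hbpos
  · rw [← hb0, mul_zero]; exact hc
  · rw [← le_div_iff₀ hbpos]
    exact csSup_le hne₁ fun x hx => (le_div_iff₀ hbpos).2 (key x hx)

end Helpers

theorem thetaMinus_mul_thetaPlus_le_thetaPlus_disjProd {V W : Type*}
    [Fintype V] [Fintype W] (G : SimpleGraph V) (H : SimpleGraph W) :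
    G.thetaMinus * H.thetaPlus ≤ (G.disjProd H).thetaPlus := by
  classical
  rw [SimpleGraph.thetaMinus, SimpleGraph.thetaPlus, SimpleGraph.thetaPlus]
  apply sup_mul_sup_le'
  · rintro x ⟨B, hB, -, -, -, rfl⟩; exact sum_sum_nonneg' hB
  · rintro y ⟨C, hC, -, -, rfl⟩; exact sum_sum_nonneg' hC
  · rintro z ⟨D, hD, -, -, rfl⟩; exact sum_sum_nonneg' hD
  · refine ⟨(Fintype.card (V × W) : ℝ), ?_⟩
    rintro z ⟨D, hD, htr, -, rfl⟩
    have h := sum_sum_le_card_mul_trace' hD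
    rwa [htr, mul_one] at h
  · rintro x ⟨B, hB, hBtr, hBnn, hBedge, rfl⟩ y ⟨C, hC, hCtr, hCedge, rfl⟩
    refine ⟨Matrix.kroneckerMap (· * ·) B C, kron_psd' hB hC, ?_, ?_, ?_⟩
    · rw [Matrix.trace_kronecker, hBtr, hCtr, mul_one]
    · intro p q h; obtain h | h : G.Adj p.1 q.1 ∨ H.Adj p.2 q.2 := h
      · show B p.1 q.1 * C p.2 q.2 ≤ 0
        rw [hBedge _ _ h, zero_mul]
      · show B p.1 q.1 * C p.2 q.2 ≤ 0
        exact mul_nonpos_iff.2 (Or.inl ⟨hBnn _ _, hCedge _ _ h⟩)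
    · exact (sum_sum_kron' B C).symm
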